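/- Let A be a Noetherian flat K[t]-algebra and M, N finitely generated A-modules flat over K[t]. If Ext^i_A(M, N) is flat over K[t] for all i ≤ h, then for every m ≥ 1 and every i ≤ h−1 there is an isomorphism Ext^i_A(M, N/t^mN) ≅ Ext^i_A(M, N)/t^m Ext^i_A(M, N), and this module is flat over K[t]/(t^m). -/

import Mathlib

noncomputable section
open CategoryTheory Polynomial

variable (K A : Type) [Field K] [CommRing A] [Algebra (Polynomial K) A]

/-- The image of the variable `t` in `A`. -/
def tA : A := algebraMap (Polynomial K) A Polynomial.X

variable (M : Type) [AddCommGroup M] [Module A M]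

/-- The submodule `t^k M` of `M`. -/
def tsub (k : ℕ) : Submodule A M := LinearMap.range (LinearMap.lsmul A M ((tA K A)^k))

variable {M}

/-- The natural projection `M/t^lM → M/t^kM` for `k ≤ l`. -/
def projMap {k l : ℕ} (h : k ≤ l) : (M ⧸ tsub K A M l) →ₗ[A] M ⧸ tsub K A M k :=
  Submodule.mapQ _ _ LinearMap.id (by
    rintro x ⟨y, rfl⟩
    refine ⟨(tA K A)^(l-k) • y, ?_⟩
    simp only [LinearMap.lsmul_apply, LinearMap.id_coe, id_eq, smul_smul, ← pow_add]
    rw [Nat.add_sub_cancel' h])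

/-- The map `M/t^kM → M/t^lM` given by multiplication by `t^{l-k}`, for `k ≤ l`. -/
def mulMap {k l : ℕ} (h : k ≤ l) : (M ⧸ tsub K A M k) →ₗ[A] M ⧸ tsub K A M l :=
  Submodule.mapQ _ _ (LinearMap.lsmul A M ((tA K A)^(l-k))) (by
    rintro x ⟨y, rfl⟩
    refine ⟨y, ?_⟩
    simp only [LinearMap.lsmul_apply, smul_smul, ← pow_add]
    rw [Nat.sub_add_cancel h])

/-- `M/t^kM` as an object of the category of `A`-modules. -/
abbrev Qu (k : ℕ) : ModuleCat.{0} A := ModuleCat.of A (M ⧸ tsub K A M k)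

variable (N : Type) [AddCommGroup N] [Module A N]

/-- The map `Ext^i_A(M/t^kM, N) → Ext^i_A(M/t^lM, N)` induced by the natural
projection `M/t^lM → M/t^kM`. -/
def extProj (i k l : ℕ) (h : k ≤ l) :
    ((Ext A (ModuleCat.{0} A) i).obj (Opposite.op (Qu K A (M := M) k))).obj (ModuleCat.of A N) ⟶
    ((Ext A (ModuleCat.{0} A) i).obj (Opposite.op (Qu K A (M := M) l))).obj (ModuleCat.of A N) :=
  ((Ext A (ModuleCat.{0} A) i).map (ModuleCat.ofHom (projMap K A h)).op).app (ModuleCat.of A N)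

/-- The map `Ext^i_A(M/t^lM, N) → Ext^i_A(M/t^kM, N)` induced by
multiplication `t^{l-k} : M/t^kM → M/t^lM`. -/
def extMul (i k l : ℕ) (h : k ≤ l) :
    ((Ext A (ModuleCat.{0} A) i).obj (Opposite.op (Qu K A (M := M) l))).obj (ModuleCat.of A N) ⟶
    ((Ext A (ModuleCat.{0} A) i).obj (Opposite.op (Qu K A (M := M) k))).obj (ModuleCat.of A N) :=
  ((Ext A (ModuleCat.{0} A) i).map (ModuleCat.ofHom (mulMap K A h)).op).app (ModuleCat.of A N)

/-- `M` is `N`-fiber-full up to `h`: for every `m ≥ 1`, the natural projection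
`M/t^mM → M/tM` induces injective maps `Ext^i_A(M/tM, N) → Ext^i_A(M/t^mM, N)`
for all `i ≤ h`. -/
def NFiberFull (h : ℤ) : Prop :=
  ∀ m : ℕ, ∀ _hm : 0 < m, ∀ i : ℕ, (i : ℤ) ≤ h →
    Function.Injective (extProj K A (M := M) N i 1 m (by omega))

/-- The quotient ring `A/(t^m)`. -/
abbrev Am (m : ℕ) : Type := A ⧸ Ideal.span {(tA K A)^m}

/-- The quotient ring `K[t]/(t^m)`. -/
abbrev Ktm (m : ℕ) : Type := Polynomial K ⧸ Ideal.span {(X : Polynomial K)^m}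

/-- The induced ring map `K[t]/(t^m) → A/(t^m)`. -/
def KtmToAm (m : ℕ) : Ktm K m →+* Am K A m :=
  Ideal.quotientMap (Ideal.span {(tA K A)^m}) (algebraMap (Polynomial K) A) (by
    rw [Ideal.span_le, Set.singleton_subset_iff]
    simp only [SetLike.mem_coe, Ideal.mem_comap, map_pow]
    exact Ideal.subset_span rfl)

/-- `P/t^kP` is killed by `t^m` whenever `k ≤ m`. -/
lemma tsub_quot_torsion_le (P : Type) [AddCommGroup P] [Module A P] (k m : ℕ) (hkm : k ≤ m) :
    Module.IsTorsionBySet A (P ⧸ tsub K A P k) (Ideal.span {(tA K A)^m} : Ideal A) := by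
  rw [← Module.isTorsionBySet_iff_is_torsion_by_span,
    Module.isTorsionBySet_singleton_iff]
  intro x
  obtain ⟨y, rfl⟩ := Submodule.Quotient.mk_surjective _ x
  rw [← Submodule.Quotient.mk_smul, Submodule.Quotient.mk_eq_zero]
  refine ⟨(tA K A)^(m-k) • y, ?_⟩
  simp only [LinearMap.lsmul_apply, smul_smul, ← pow_add]
  rw [Nat.add_sub_cancel' hkm]

/-- The `A/(t^m)`-module structure on `P/t^mP`. -/
noncomputable instance quotAmModule (P : Type) [AddCommGroup P] [Module A P] (m : ℕ) :
    Module (Am K A m) (P ⧸ tsub K A P m) :=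
  (tsub_quot_torsion_le K A P m m le_rfl).module

/-- A module over `A/(t^m)` is flat over `K[t]/(t^m)` (via the induced map
`K[t]/(t^m) → A/(t^m)`). -/
def FlatOverKtm (m : ℕ) (P : Type) [AddCommGroup P] [Module (Am K A m) P] : Prop :=
  letI : Module (Ktm K m) P := Module.compHom P (KtmToAm K A m)
  Module.Flat (Ktm K m) P

section Aux

open TensorProduct

variable {K A}

lemma mem_tsub_iff {P : Type} [AddCommGroup P] [Module A P] {k : ℕ} {x : P} :
    x ∈ tsub K A P k ↔ ∃ y, (tA K A)^k • y = x := Iff.rfl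

lemma flat_smul_injective' {R : Type} [CommRing R] [IsDomain R] {r : R} (hr : r ≠ 0)
    (M₀ : Type) [AddCommGroup M₀] [Module R M₀] [Module.Flat R M₀] :
    Function.Injective (fun x : M₀ => r • x) := by
  have hR : IsSMulRegular R r := fun a b hab => by
    simpa using mul_left_cancel₀ hr (by simpa [smul_eq_mul] using hab)
  exact IsSMulRegular.of_injective (TensorProduct.rid R M₀).symm.toLinearMap
    (TensorProduct.rid R M₀).symm.injective (hR.lTensor M₀)

lemma homologyMap_smul'' {ι : Type} {c : ComplexShape ι}
    {K₁ K₂ : HomologicalComplex (ModuleCat.{0} A) c} (φ : K₁ ⟶ K₂) (i : ι) (a : A) :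
    HomologicalComplex.homologyMap (a • φ) i = a • HomologicalComplex.homologyMap φ i := by
  have h : (HomologicalComplex.shortComplexFunctor (ModuleCat.{0} A) c i).map (a • φ)
      = a • (HomologicalComplex.shortComplexFunctor (ModuleCat.{0} A) c i).map φ := rfl
  show ShortComplex.homologyMap _ = _
  rw [h, ShortComplex.homologyMap_smul]
  rfl

lemma tsub_map_equiv {P Q' : Type} [AddCommGroup P] [Module A P] [AddCommGroup Q']
    [Module A Q'] (e : P ≃ₗ[A] Q') (k : ℕ) :
    Submodule.map (e : P →ₗ[A] Q') (tsub K A P k) = tsub K A Q' k := by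
  ext x
  constructor
  · rintro ⟨_, ⟨y, rfl⟩, rfl⟩
    exact ⟨e y, by simp⟩
  · rintro ⟨y, rfl⟩
    exact ⟨(tA K A)^k • e.symm y, ⟨e.symm y, rfl⟩, by simp⟩

set_option synthInstance.maxHeartbeats 1000000 in
set_option maxHeartbeats 1000000 in
lemma flatOverKtm_of_flat (m : ℕ) (E : Type) [AddCommGroup E] [Module A E]
    (hE : Module.Flat (Polynomial K) (RestrictScalars (Polynomial K) A E)) :
    FlatOverKtm K A m (E ⧸ tsub K A E m) := by
  set R := Polynomial K with hR
  set I : Ideal R := Ideal.span {(X : R)^m} with hI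
  set P := E ⧸ tsub K A E m with hP
  set M₀ := RestrictScalars (Polynomial K) A E with hM₀
  let ad : M₀ ≃+ E := RestrictScalars.addEquiv _ _ _
  letI mS : Module (Ktm K m) P := Module.compHom _ (KtmToAm K A m)
  letI mR : Module R P := Module.compHom P (algebraMap R (Ktm K m))
  haveI tower : IsScalarTower R (Ktm K m) P := IsScalarTower.of_compHom R (Ktm K m) P
  letI : AddCommMonoid M₀ := AddCommGroup.toAddCommMonoid
  letI : Module R M₀ := RestrictScalars.module R A E
  haveI : Module.Flat R M₀ := hE
  have hsmulP : ∀ (r : R) (x : E),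
      r • (Submodule.Quotient.mk x : P) = Submodule.Quotient.mk (algebraMap R A r • x) := by
    intro r x
    show (KtmToAm K A m) (algebraMap R (Ktm K m) r) • (Submodule.Quotient.mk x : P) = _
    have h2 : (KtmToAm K A m) (Ideal.Quotient.mk I r)
        = Ideal.Quotient.mk (Ideal.span {(tA K A)^m}) (algebraMap R A r) :=
      Ideal.quotientMap_mk
    have h1 : algebraMap R (Ktm K m) r = Ideal.Quotient.mk I r := rfl
    rw [h1, h2, Module.IsTorsionBySet.mk_smul (tsub_quot_torsion_le K A E m m le_rfl)]
    rfl
  have hsmulM₀ : ∀ (r : R) (x : M₀), ad (r • x) = algebraMap R A r • ad x := by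
    intro r x
    exact RestrictScalars.addEquiv_map_smul R A E r x
  -- the R-linear map M₀ → P
  let g0 : M₀ →ₗ[R] P :=
    { toFun := fun x => Submodule.Quotient.mk (ad x)
      map_add' := fun x y => by
        show (Submodule.Quotient.mk (ad (x + y)) : P)
            = Submodule.Quotient.mk (ad x) + Submodule.Quotient.mk (ad y)
        rw [map_add, Submodule.Quotient.mk_add]
      map_smul' := fun r x => by
        show (Submodule.Quotient.mk (ad (r • x)) : P) = r • Submodule.Quotient.mk (ad x)
        rw [hsmulM₀, hsmulP] }
  have hg0ker : I • (⊤ : Submodule R M₀) ≤ LinearMap.ker g0 := by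
    apply Submodule.smul_le.2
    rintro r hr x -
    obtain ⟨a, rfl⟩ := Ideal.mem_span_singleton'.1 hr
    simp only [LinearMap.mem_ker]
    show (Submodule.Quotient.mk (ad ((a * (X:R)^m) • x)) : P) = 0
    rw [hsmulM₀, Submodule.Quotient.mk_eq_zero]
    refine ⟨algebraMap R A a • ad x, ?_⟩
    show (tA K A)^m • (algebraMap R A a • ad x) = _
    rw [map_mul, map_pow, mul_smul, smul_comm]
    rfl
  let u : (M₀ ⧸ (I • (⊤ : Submodule R M₀))) →ₗ[R] P := Submodule.liftQ _ g0 hg0ker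
  have humk : ∀ x : M₀, u (Submodule.Quotient.mk x) = Submodule.Quotient.mk (ad x) :=
    fun x => rfl
  have huinj : Function.Injective u := by
    intro a b hab
    obtain ⟨x, rfl⟩ := Submodule.Quotient.mk_surjective _ a
    obtain ⟨y, rfl⟩ := Submodule.Quotient.mk_surjective _ b
    rw [← sub_eq_zero, ← Submodule.Quotient.mk_sub, Submodule.Quotient.mk_eq_zero]
    have h3 : u (Submodule.Quotient.mk (x - y)) = 0 := by
      rw [Submodule.Quotient.mk_sub, map_sub, hab, sub_self]
    rw [humk, Submodule.Quotient.mk_eq_zero] at h3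
    obtain ⟨z, hz⟩ := h3
    have hmem : ((X:R)^m) • (ad.symm z) ∈ I • (⊤ : Submodule R M₀) :=
      Submodule.smul_mem_smul (Ideal.subset_span rfl) Submodule.mem_top
    have heq : ((X:R)^m) • (ad.symm z) = x - y := by
      apply ad.injective
      rw [hsmulM₀, map_pow, ad.apply_symm_apply]
      exact hz
    rwa [heq] at hmem
  have husurj : Function.Surjective u := by
    intro p
    obtain ⟨x, rfl⟩ := Submodule.Quotient.mk_surjective _ p
    exact ⟨Submodule.Quotient.mk (ad.symm x), by rw [humk, ad.apply_symm_apply]⟩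
  let e2 : (M₀ ⧸ (I • (⊤ : Submodule R M₀))) ≃ₗ[R] P :=
    LinearEquiv.ofBijective u ⟨huinj, husurj⟩
  let e1 : ((Ktm K m) ⊗[R] M₀) ≃ₗ[R] (M₀ ⧸ (I • (⊤ : Submodule R M₀))) :=
    TensorProduct.quotTensorEquivQuotSMul M₀ I
  have halg : Function.Surjective (algebraMap R (Ktm K m)) :=
    Ideal.Quotient.mk_surjective
  let eS : ((Ktm K m) ⊗[R] M₀) ≃ₗ[Ktm K m] P :=
    (e1.trans e2).extendScalarsOfSurjective halg
  exact Module.Flat.of_linearEquiv eS.symm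


set_option maxHeartbeats 2000000 in
set_option synthInstance.maxHeartbeats 1000000 in
lemma ext_quot_equiv [Module (Polynomial K) N] [IsScalarTower (Polynomial K) A N]
    [Module.Flat (Polynomial K) N] (m i : ℕ)
    (hinj : Function.Injective (fun x : (((Ext A (ModuleCat.{0} A) (i+1)).obj
        (Opposite.op (ModuleCat.of A M))).obj (ModuleCat.of A N)) => (tA K A)^m • x)) :
    Nonempty ((((Ext A (ModuleCat.{0} A) i).obj (Opposite.op (ModuleCat.of A M))).obj
        (ModuleCat.of A (N ⧸ tsub K A N m))) ≃ₗ[A]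
      ((((Ext A (ModuleCat.{0} A) i).obj (Opposite.op (ModuleCat.of A M))).obj
          (ModuleCat.of A N)) ⧸
        tsub K A (((Ext A (ModuleCat.{0} A) i).obj (Opposite.op (ModuleCat.of A M))).obj
          (ModuleCat.of A N)) m)) := by
  obtain ⟨P⟩ : Nonempty (ProjectiveResolution (ModuleCat.of A M)) := HasProjectiveResolution.out
  set c : A := (tA K A)^m with hc
  let NN : ModuleCat.{0} A := ModuleCat.of A N
  let QQ : ModuleCat.{0} A := ModuleCat.of A (N ⧸ tsub K A N m)
  let f : NN ⟶ NN := ModuleCat.ofHom (LinearMap.lsmul A N c)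
  let g : NN ⟶ QQ := ModuleCat.ofHom (tsub K A N m).mkQ
  have hfg : f ≫ g = 0 := by
    ext x
    show (tsub K A N m).mkQ (c • x) = 0
    rw [Submodule.mkQ_apply, Submodule.Quotient.mk_eq_zero]
    exact ⟨x, rfl⟩
  have hXm : ((X : Polynomial K)^m) ≠ 0 := pow_ne_zero _ Polynomial.X_ne_zero
  have keyN : ∀ y : N, ((X : Polynomial K)^m) • y = c • y := by
    intro y
    rw [hc]
    unfold tA
    rw [← map_pow, IsScalarTower.algebraMap_smul]
  have hNinj : Function.Injective (fun x : N => c • x) := by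
    intro a b hab
    refine flat_smul_injective' hXm N ?_
    show ((X : Polynomial K)^m) • a = ((X : Polynomial K)^m) • b
    rw [keyN, keyN]
    exact hab
  let S : ShortComplex (ModuleCat.{0} A) := ShortComplex.mk f g hfg
  have hS : S.ShortExact := by
    have h1 : Mono S.f := (ModuleCat.mono_iff_injective _).2 hNinj
    have h2 : Epi S.g := (ModuleCat.epi_iff_surjective _).2 (Submodule.mkQ_surjective _)
    refine ShortComplex.ShortExact.mk ?_
    rw [ShortComplex.moduleCat_exact_iff]
    intro x hx
    have hx' : x ∈ tsub K A N m := (Submodule.Quotient.mk_eq_zero _).1 hx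
    exact hx'
  -- the Hom complexes and induced maps
  let hccMap : ∀ {Y Z : ModuleCat.{0} A} (φ : Y ⟶ Z),
      P.complex.linearYonedaObj A Y ⟶ P.complex.linearYonedaObj A Z := fun {Y Z} φ =>
    { f := fun n => ModuleCat.ofHom (Linear.rightComp A _ φ)
      comm' := fun n n' _ => by
        ext (u : P.complex.X n ⟶ Y)
        show (P.complex.d n' n ≫ u) ≫ φ = P.complex.d n' n ≫ (u ≫ φ)
        rw [Category.assoc] }
  let KN := P.complex.linearYonedaObj A NN
  let KQ := P.complex.linearYonedaObj A QQ
  let SC : ShortComplex (CochainComplex (ModuleCat.{0} A) ℕ) :=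
    ShortComplex.mk (hccMap f) (hccMap g) (by
      ext n (u : P.complex.X n ⟶ NN)
      show (u ≫ f) ≫ g = 0
      rw [Category.assoc, hfg, Limits.comp_zero])
  have hSC : SC.ShortExact := by
    rw [HomologicalComplex.shortExact_iff_degreewise_shortExact]
    intro n
    haveI : Projective (P.complex.X n) := P.projective n
    haveI hEg : Epi g := hS.epi_g
    have h1 : Mono (SC.map (HomologicalComplex.eval _ _ n)).f := by
      rw [ModuleCat.mono_iff_injective]
      intro u v huv
      let u' : P.complex.X n ⟶ NN := u
      let v' : P.complex.X n ⟶ NN := v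
      have huv' : u' ≫ f = v' ≫ f := huv
      show u' = v'
      ext p
      apply hNinj
      exact congrArg (fun (w : P.complex.X n ⟶ NN) => w p) huv'
    have h2 : Epi (SC.map (HomologicalComplex.eval _ _ n)).g := by
      rw [ModuleCat.epi_iff_surjective]
      intro w
      let w' : P.complex.X n ⟶ QQ := w
      refine ⟨(Projective.factorThru w' g : P.complex.X n ⟶ NN), ?_⟩
      show Projective.factorThru w' g ≫ g = w'
      exact Projective.factorThru_comp w' g
    refine ShortComplex.ShortExact.mk ?_
    rw [ShortComplex.moduleCat_exact_iff]
    intro u hu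
    let u' : P.complex.X n ⟶ NN := u
    have hu' : u' ≫ g = 0 := hu
    have hmem : ∀ p, u' p ∈ tsub K A N m := by
      intro p
      have h0 : g (u' p) = 0 := congrArg (fun (w : P.complex.X n ⟶ QQ) => w p) hu'
      exact (Submodule.Quotient.mk_eq_zero _).1 h0
    let lf := LinearMap.lsmul A N c
    have hlf : Function.Injective lf := hNinj
    let w : P.complex.X n ⟶ NN := ModuleCat.ofHom
      (((LinearEquiv.ofInjective lf hlf).symm.toLinearMap).comp
        (LinearMap.codRestrict (LinearMap.range lf) u'.hom hmem))
    refine ⟨w, ?_⟩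
    show w ≫ f = u'
    ext p
    show lf ((LinearEquiv.ofInjective lf hlf).symm ⟨u' p, hmem p⟩) = u' p
    have h6 := (LinearEquiv.ofInjective lf hlf).apply_symm_apply ⟨u' p, hmem p⟩
    rw [← LinearEquiv.ofInjective_apply lf (h := hlf), h6]
  have hrel : (ComplexShape.up ℕ).Rel i (i+1) := rfl
  have hfsmul : hccMap f = c • (𝟙 KN) := by
    ext n (u : P.complex.X n ⟶ NN)
    show u ≫ f = c • u
    ext p
    show c • (u p) = c • (u p)
    rfl
  have hHfs : ∀ j, HomologicalComplex.homologyMap (hccMap f) j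
      = c • (𝟙 (KN.homology j)) := by
    intro j
    have : HomologicalComplex.homologyMap (hccMap f) j
        = HomologicalComplex.homologyMap (c • (𝟙 KN)) j := by rw [hfsmul]
    rw [this, homologyMap_smul'', HomologicalComplex.homologyMap_id]
  let eN1 := (ProjectiveResolution.isoExt (R := A) P (i+1) NN).toLinearEquiv
  have hinjH : Function.Injective (fun x : KN.homology (i+1) => c • x) := by
    intro a b hab
    have h1 : c • eN1.symm a = c • eN1.symm b := by
      rw [← map_smul, ← map_smul]
      exact congrArg eN1.symm hab
    exact eN1.symm.injective (hinj h1)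
  have hδ : ∀ x, hSC.δ i (i+1) rfl x = 0 := by
    intro x
    have h1 : HomologicalComplex.homologyMap SC.f (i+1) (hSC.δ i (i+1) rfl x) = 0 := by
      have h0 := hSC.δ_comp i (i+1) rfl
      have := congrArg (fun (w : KQ.homology i ⟶ KN.homology (i+1)) => w x) h0
      exact this
    rw [hHfs (i+1)] at h1
    apply hinjH
    show c • _ = c • (0 : KN.homology (i+1))
    rw [smul_zero]
    exact h1
  have hsurj : Function.Surjective (HomologicalComplex.homologyMap SC.g i) := by
    have h3 := (hSC.homology_exact₃ i (i+1) rfl).moduleCat_range_eq_ker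
    intro y
    have hy : y ∈ LinearMap.ker (hSC.δ i (i+1) rfl).hom := hδ y
    rw [← h3] at hy
    exact hy
  have hker : LinearMap.ker (HomologicalComplex.homologyMap SC.g i).hom
      = tsub K A (KN.homology i) m := by
    have h2 := (hSC.homology_exact₂ i).moduleCat_range_eq_ker
    rw [← h2]
    have h4 : (HomologicalComplex.homologyMap SC.f i).hom
        = LinearMap.lsmul A (KN.homology i) c := by
      rw [hHfs i]
      ext x
      rfl
    show LinearMap.range (HomologicalComplex.homologyMap SC.f i).hom
        = tsub K A (KN.homology i) m
    rw [h4, hc]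
    rfl
  let ψl : KN.homology i →ₗ[A] KQ.homology i := (HomologicalComplex.homologyMap SC.g i).hom
  let q1 : (KN.homology i ⧸ LinearMap.ker ψl) ≃ₗ[A] KQ.homology i :=
    ψl.quotKerEquivOfSurjective hsurj
  let q2 : (KN.homology i ⧸ LinearMap.ker ψl) ≃ₗ[A]
      (KN.homology i ⧸ tsub K A (KN.homology i) m) :=
    Submodule.quotEquivOfEq _ _ hker
  let eN := (ProjectiveResolution.isoExt (R := A) P i NN).toLinearEquiv
  let eQ := (ProjectiveResolution.isoExt (R := A) P i QQ).toLinearEquiv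
  let q3 := Submodule.Quotient.equiv (tsub K A (KN.homology i) m)
    (tsub K A (((Ext A (ModuleCat.{0} A) i).obj (Opposite.op (ModuleCat.of A M))).obj
          (ModuleCat.of A N)) m) eN.symm (tsub_map_equiv eN.symm m)
  exact ⟨eQ.trans (q1.symm.trans (q2.trans q3))⟩

end Aux

/-- If `Ext^i_A(M, N)` is flat over `K[t]` for all `i ≤ h`, then for every
`m ≥ 1` and every `i ≤ h-1` there is an `A`-linear isomorphism
`Ext^i_A(M, N/t^mN) ≅ Ext^i_A(M, N)/t^m Ext^i_A(M, N)`, and this module is flat over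
`K[t]/(t^m)`. -/
theorem ext_mod_tm_iso_and_flat
    [IsNoetherianRing A] [Module.Flat (Polynomial K) A]
    [Module.Finite A M] [Module (Polynomial K) M] [IsScalarTower (Polynomial K) A M]
    [Module.Flat (Polynomial K) M]
    [Module.Finite A N] [Module (Polynomial K) N] [IsScalarTower (Polynomial K) A N]
    [Module.Flat (Polynomial K) N]
    (h : ℤ)
    (hflat : ∀ i : ℕ, (i : ℤ) ≤ h →
      Module.Flat (Polynomial K) (RestrictScalars (Polynomial K) A
        (((Ext A (ModuleCat.{0} A) i).obj
            (Opposite.op (ModuleCat.of A M))).obj (ModuleCat.of A N)))) :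
    ∀ m : ℕ, 0 < m → ∀ i : ℕ, (i : ℤ) ≤ h - 1 →
      Nonempty
        ((((Ext A (ModuleCat.{0} A) i).obj
            (Opposite.op (ModuleCat.of A M))).obj (ModuleCat.of A (N ⧸ tsub K A N m))) ≃ₗ[A]
          ((((Ext A (ModuleCat.{0} A) i).obj
              (Opposite.op (ModuleCat.of A M))).obj (ModuleCat.of A N)) ⧸
            tsub K A (((Ext A (ModuleCat.{0} A) i).obj
              (Opposite.op (ModuleCat.of A M))).obj (ModuleCat.of A N)) m)) ∧
      FlatOverKtm K A m
        ((((Ext A (ModuleCat.{0} A) i).obj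
            (Opposite.op (ModuleCat.of A M))).obj (ModuleCat.of A N)) ⧸
          tsub K A (((Ext A (ModuleCat.{0} A) i).obj
            (Opposite.op (ModuleCat.of A M))).obj (ModuleCat.of A N)) m) := by
  intro m _hm i hi
  have hXm : ((X : Polynomial K)^m) ≠ 0 := pow_ne_zero _ Polynomial.X_ne_zero
  constructor
  · haveI := hflat (i+1) (by push_cast; omega)
    set E1 := (((Ext A (ModuleCat.{0} A) (i+1)).obj
        (Opposite.op (ModuleCat.of A M))).obj (ModuleCat.of A N)) with hE1
    let ad := RestrictScalars.addEquiv (Polynomial K) A E1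
    have hinj : Function.Injective (fun x : E1 => (tA K A)^m • x) := by
      intro a b hab
      have hab' : algebraMap (Polynomial K) A ((X : Polynomial K)^m) • a
          = algebraMap (Polynomial K) A ((X : Polynomial K)^m) • b := by
        rw [map_pow]; exact hab
      have h3 : ((X : Polynomial K)^m) • (ad.symm a) = ((X : Polynomial K)^m) • (ad.symm b) := by
        rw [← RestrictScalars.addEquiv_symm_map_algebraMap_smul,
            ← RestrictScalars.addEquiv_symm_map_algebraMap_smul, hab']
      letI : AddCommMonoid (RestrictScalars (Polynomial K) A E1) := AddCommGroup.toAddCommMonoid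
      letI : Module (Polynomial K) (RestrictScalars (Polynomial K) A E1) :=
        RestrictScalars.module _ A E1
      haveI : Module.Flat (Polynomial K) (RestrictScalars (Polynomial K) A E1) :=
        hflat (i+1) (by push_cast; omega)
      have h4 := flat_smul_injective' (R := Polynomial K) hXm
        (RestrictScalars (Polynomial K) A E1) h3
      have h5 := congrArg ad h4
      simpa using h5
    exact ext_quot_equiv (N := N) m i hinj
  · exact flatOverKtm_of_flat m _ (hflat i (by omega))
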